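/- Let n ≥ 1, x ∈ ℝ, k ∈ ℤ, and let C : ℝ → ℝ be a function that is affine on the interval x + (k·2^{−n+1}, (k+1)·2^{−n+1}). Then there is a subinterval I ⊂ (k·2^{−n+1}, (k+1)·2^{−n+1}) of length at least 2^{−n} such that B_n + C is affine on x + I. -/

import Mathlib

/-- Distance from `t` to the nearest integer: the sawtooth generator of the blancmange
function. -/
noncomputable def saw (t : ℝ) : ℝ := |t - round t|

/-- `s_k(t) = s(2^k t)/2^k`. -/
noncomputable def sawk (k : ℕ) (t : ℝ) : ℝ := saw (2 ^ k * t) / 2 ^ k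

/-- Partial sums `B_n(t) = ∑_{k<n} s_k(t)`. -/
noncomputable def blancN (n : ℕ) (t : ℝ) : ℝ := ∑ k ∈ Finset.range n, sawk k t

lemma saw_affine (j : ℤ) : ∃ a q : ℝ, ∀ v ∈ Set.Ioo ((j:ℝ)/2) (((j:ℝ)+1)/2),
    saw v = a * v + q := by
  rcases Int.even_or_odd j with ⟨i, hi⟩ | ⟨i, hi⟩
  · refine ⟨1, -i, fun v hv => ?_⟩
    obtain ⟨h1, h2⟩ := hv
    have hji : (j:ℝ) = 2 * i := by push_cast [hi]; ring
    rw [hji] at h1 h2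
    have hr : round v = i := by
      rw [round_eq]
      apply Int.floor_eq_iff.mpr
      constructor <;> push_cast <;> linarith
    rw [saw, hr, abs_of_nonneg (by linarith)]; ring
  · refine ⟨-1, (i:ℝ)+1, fun v hv => ?_⟩
    obtain ⟨h1, h2⟩ := hv
    have hji : (j:ℝ) = 2 * i + 1 := by push_cast [hi]; ring
    rw [hji] at h1 h2
    have hr : round v = i + 1 := by
      rw [round_eq]
      apply Int.floor_eq_iff.mpr
      constructor <;> push_cast <;> linarith
    rw [saw, hr, abs_of_nonpos (by push_cast; linarith)]; push_cast; ring

lemma sawk_affine (k : ℕ) (j : ℤ) : ∃ a q : ℝ,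
    ∀ v ∈ Set.Ioo ((j:ℝ)/2^(k+1)) (((j:ℝ)+1)/2^(k+1)), sawk k v = a * v + q := by
  obtain ⟨a, q, h⟩ := saw_affine j
  refine ⟨a, q / 2^k, fun v hv => ?_⟩
  obtain ⟨h1, h2⟩ := hv
  have hk : (0:ℝ) < 2^k := by positivity
  have hk1 : (0:ℝ) < 2^(k+1) := by positivity
  rw [div_lt_iff₀ hk1] at h1
  rw [lt_div_iff₀ hk1] at h2
  have hv' : (2:ℝ)^k * v ∈ Set.Ioo ((j:ℝ)/2) (((j:ℝ)+1)/2) := by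
    rw [pow_succ] at h1 h2
    constructor
    · rw [div_lt_iff₀ (by norm_num : (0:ℝ) < 2)]; nlinarith
    · rw [lt_div_iff₀ (by norm_num : (0:ℝ) < 2)]; nlinarith
  rw [sawk, h _ hv']
  field_simp

lemma blancN_affine (n : ℕ) (m : ℤ) : ∃ a q : ℝ,
    ∀ v ∈ Set.Ioo ((m:ℝ)/2^n) (((m:ℝ)+1)/2^n), blancN n v = a * v + q := by
  have key : ∀ k : ℕ, ∃ a q : ℝ, ∀ v ∈ Set.Ioo ((m:ℝ)/2^n) (((m:ℝ)+1)/2^n),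
      k < n → sawk k v = a * v + q := by
    intro k
    by_cases hk : k < n
    · set d : ℤ := 2^(n-1-k) with hd
      have hdpos : 0 < d := by positivity
      set j : ℤ := m / d with hj
      set r : ℤ := m % d with hr
      have hm : d * j + r = m := Int.mul_ediv_add_emod m d
      have hr0 : 0 ≤ r := Int.emod_nonneg m (by omega)
      have hrd : r < d := Int.emod_lt_of_pos m hdpos
      have hpow : (2:ℝ)^n = 2^(k+1) * (d:ℝ) := by
        rw [hd]
        push_cast
        rw [← pow_add]
        congr 1
        omega
      obtain ⟨a, q, h⟩ := sawk_affine k j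
      refine ⟨a, q, fun v hv _ => ?_⟩
      apply h
      obtain ⟨h1, h2⟩ := hv
      have h2n : (0:ℝ) < 2^n := by positivity
      have h2k : (0:ℝ) < 2^(k+1) := by positivity
      have hdR : (0:ℝ) < (d:ℝ) := by exact_mod_cast hdpos
      have hmR : (d:ℝ) * j + r = m := by exact_mod_cast hm
      have hrR : (0:ℝ) ≤ r := by exact_mod_cast hr0
      have hrdR : (r:ℝ) + 1 ≤ d := by exact_mod_cast hrd
      constructor
      · calc ((j:ℝ))/2^(k+1) ≤ (m:ℝ)/2^n := by
              rw [div_le_div_iff₀ h2k h2n, hpow]; nlinarith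
          _ < v := h1
      · calc v < ((m:ℝ)+1)/2^n := h2
          _ ≤ ((j:ℝ)+1)/2^(k+1) := by
              rw [div_le_div_iff₀ h2n h2k, hpow]; nlinarith
    · exact ⟨0, 0, fun v _ hkn => absurd hkn hk⟩
  choose a q h using key
  refine ⟨∑ k ∈ Finset.range n, a k, ∑ k ∈ Finset.range n, q k, fun v hv => ?_⟩
  rw [blancN, Finset.sum_mul, ← Finset.sum_add_distrib]
  exact Finset.sum_congr rfl fun k hk => h k v hv (Finset.mem_range.mp hk)

/-- If `C` is affine on `x + (k·2^{−n+1}, (k+1)·2^{−n+1})`, then there is a subinterval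
`I ⊆ (k·2^{−n+1}, (k+1)·2^{−n+1})` of length at least `2^{−n}` such that `B_n + C` is
affine on `x + I`. -/
theorem stmt6 (n : ℕ) (hn : 1 ≤ n) (x : ℝ) (k : ℤ) (C : ℝ → ℝ)
    (hC : ∃ a q : ℝ, ∀ t ∈ Set.Ioo ((k : ℝ) * 2 ^ (-(n : ℤ) + 1))
      (((k : ℝ) + 1) * 2 ^ (-(n : ℤ) + 1)), C (x + t) = a * (x + t) + q) :
    ∃ α β : ℝ, (2 : ℝ) ^ (-(n : ℤ)) ≤ β - α ∧
      Set.Ioo α β ⊆ Set.Ioo ((k : ℝ) * 2 ^ (-(n : ℤ) + 1))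
        (((k : ℝ) + 1) * 2 ^ (-(n : ℤ) + 1)) ∧
      ∃ a q : ℝ, ∀ t ∈ Set.Ioo α β, blancN n (x + t) + C (x + t) = a * (x + t) + q := by
  obtain ⟨a0, q0, hC⟩ := hC
  have h2n : (0:ℝ) < 2^n := by positivity
  have hp : (2:ℝ) ^ (-(n:ℤ)) = ((2:ℝ)^n)⁻¹ := by rw [zpow_neg, zpow_natCast]
  have hp' : (2:ℝ) ^ (-(n:ℤ)+1) = 2 * ((2:ℝ)^n)⁻¹ := by
    rw [zpow_add₀ (by norm_num : (2:ℝ) ≠ 0), hp, zpow_one]; ring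
  set N := (2:ℝ)^n with hNdef
  set L : ℝ := x + k * (2 * N⁻¹) with hL
  set F : ℤ := ⌊L * N⌋ with hF
  have hF1 : (F:ℝ) ≤ L * N := Int.floor_le _
  have hF2 : L * N < F + 1 := Int.lt_floor_add_one _
  have e1 : L * N = x * N + 2 * (k:ℝ) := by
    rw [hL]; field_simp
  have hsub : Set.Ioo (((F:ℝ)+1)/N - x) (((F:ℝ)+2)/N - x) ⊆ Set.Ioo ((k : ℝ) * 2 ^ (-(n : ℤ) + 1))
      (((k : ℝ) + 1) * 2 ^ (-(n : ℤ) + 1)) := by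
    intro t ht
    obtain ⟨h1, h2⟩ := ht
    rw [Set.mem_Ioo, hp']
    constructor
    · have hle : (k:ℝ) * (2*N⁻¹) + x ≤ ((F:ℝ)+1)/N := by
        rw [le_div_iff₀ h2n]
        have : ((k:ℝ)*(2*N⁻¹) + x)*N = 2*(k:ℝ) + x*N := by field_simp
        rw [this]; linarith
      have := hle.trans_lt (by linarith : ((F:ℝ)+1)/N < t + x)
      linarith
    · have hle : ((F:ℝ)+2)/N ≤ ((k:ℝ)+1) * (2*N⁻¹) + x := by
        rw [div_le_iff₀ h2n]
        have : (((k:ℝ)+1)*(2*N⁻¹) + x)*N = 2*(k:ℝ) + 2 + x*N := by field_simp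
        rw [this]; linarith
      have := (by linarith : t + x < ((F:ℝ)+2)/N).trans_le hle
      linarith
  refine ⟨((F:ℝ)+1)/N - x, ((F:ℝ)+2)/N - x, ?_, hsub, ?_⟩
  · rw [hp]
    have : ((F:ℝ)+2)/N - x - (((F:ℝ)+1)/N - x) = N⁻¹ := by field_simp; ring
    rw [this]
  · obtain ⟨a1, q1, h1⟩ := blancN_affine n (F+1)
    refine ⟨a1 + a0, q1 + q0, fun t ht => ?_⟩
    have hmem : x + t ∈ Set.Ioo (((F+1:ℤ):ℝ)/2^n) ((((F+1:ℤ):ℝ)+1)/2^n) := by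
      obtain ⟨ht1, ht2⟩ := ht
      constructor
      · push_cast; rw [← hNdef]; linarith [ht1]
      · push_cast; rw [← hNdef]
        have : ((F:ℝ)+1+1) = (F:ℝ)+2 := by ring
        rw [this]; linarith [ht2]
    rw [h1 _ hmem, hC t (hsub ht)]
    ring
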